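/- Assume h21/h22 ≤ b + b' and h11/h21 ≥ √p2·(a+a')/(√p1·(b+b')). Then the supremum of f(w1,w2) over the interval-restricted feasible set D equals (h21/(b+b'))·W2, and it is attained at (w1,w2) = ( ((a+a')·h21/((b+b')·h11))·W2 , W2 ). -/

import Mathlib

/-- The minimum Euclidean half-distance at receiver 1: the minimum of
`|h11·w1·n − h21·w2·m|` over integer pairs `(m,n) ≠ (0,0)` with
`|m| ≤ M−1` and `|n| ≤ M−1`. -/
noncomputable def minDist1 (M : ℕ) (h11 h21 w1 w2 : ℝ) : ℝ :=
  sInf {d : ℝ | ∃ m n : ℤ, (m, n) ≠ (0, 0) ∧ |m| ≤ (M : ℤ) - 1 ∧ |n| ≤ (M : ℤ) - 1 ∧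
      d = |h11 * w1 * n - h21 * w2 * m|}

/-- The smaller of the two receivers minimum Euclidean half-distances. -/
noncomputable def f (M : ℕ) (h11 h21 h22 w1 w2 : ℝ) : ℝ :=
  min (minDist1 M h11 h21 w1 w2) (h22 * w2)

/-- `b/a < b'/a'` is a Farey pair of order `K` (numerators `b, b'`,
denominators `a, a'`): `a ≥ 1`, `b' ≥ 1`, the pairs are coprime, all entries
are at most `K`, `b·a' < b'·a`, and no coprime pair `(m,n)` of nonnegative
integers, not both zero, with `m ≤ K`, `n ≤ K` satisfies `b·m < n·a` and
`n·a' < b'·m`. -/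
def FareyPairOrd (K a b a2 b2 : ℕ) : Prop :=
  1 ≤ a ∧ 1 ≤ b2 ∧ Nat.Coprime a b ∧ Nat.Coprime a2 b2 ∧
  a ≤ K ∧ b ≤ K ∧ a2 ≤ K ∧ b2 ≤ K ∧ b * a2 < b2 * a ∧
  ¬∃ m n : ℕ, Nat.Coprime m n ∧ ¬(m = 0 ∧ n = 0) ∧ m ≤ K ∧ n ≤ K ∧
    b * m < n * a ∧ n * a2 < b2 * m

/-- The interval-restricted feasible set: `0 < w1 ≤ W1`, `0 < w2 ≤ W2`, and
`b/a < h21·w2/(h11·w1) ≤ b'/a'` in cross-multiplied form. -/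
def Feas (W1 W2 h11 h21 : ℝ) (a b a2 b2 : ℕ) (w1 w2 : ℝ) : Prop :=
  0 < w1 ∧ w1 ≤ W1 ∧ 0 < w2 ∧ w2 ≤ W2 ∧
  (b : ℝ) * h11 * w1 < (a : ℝ) * h21 * w2 ∧
  (a2 : ℝ) * h21 * w2 ≤ (b2 : ℝ) * h11 * w1

theorem farey_det (K a b a2 b2 : ℕ) (h : FareyPairOrd K a b a2 b2) :
    (a : ℤ) * b2 = a2 * b + 1 := by
  obtain ⟨ha, hb2, hab, ha2b2, haK, hbK, ha2K, hb2K, hlt, hno⟩ := h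
  set d : ℤ := (a : ℤ) * b2 - a2 * b with hd
  have hd1 : 1 ≤ d := by
    have h' : (b : ℤ) * a2 < b2 * a := by exact_mod_cast hlt
    have := mul_comm (b : ℤ) (a2 : ℤ)
    have := mul_comm (b2 : ℤ) (a : ℤ)
    omega
  by_contra hne
  have hd2 : 2 ≤ d := by omega
  have hcop : IsCoprime (a2 : ℤ) (b2 : ℤ) := by
    rw [Int.isCoprime_iff_gcd_eq_one]; exact_mod_cast ha2b2
  obtain ⟨u, v, huv⟩ := hcop
  set m0 : ℤ := v with hm0
  set n0 : ℤ := -u with hn0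
  have hbez : (b2 : ℤ) * m0 - a2 * n0 = 1 := by
    simp only [hm0, hn0]; linear_combination huv
  set e0 : ℤ := a * n0 - b * m0 with he0
  set e : ℤ := (e0 - 1) % d + 1 with he
  have hemod := Int.emod_nonneg (e0 - 1) (by omega : d ≠ 0)
  have hemod2 := Int.emod_lt_of_pos (e0 - 1) (by omega : 0 < d)
  have he1 : 1 ≤ e := by omega
  have hedle : e ≤ d := by omega
  set t : ℤ := -((e0 - 1) / d) with ht
  have het : e = e0 + t * d := by
    simp only [he, ht]; linear_combination Int.emod_def (e0 - 1) d
  set m : ℤ := m0 + t * a2 with hm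
  set n : ℤ := n0 + t * b2 with hn
  have h1 : (b2 : ℤ) * m - a2 * n = 1 := by
    simp only [hm, hn]; linear_combination hbez
  have hee : (a : ℤ) * n - b * m = e := by
    simp only [hm, hn]; rw [het]; simp only [he0, hd]; ring
  have hdm : d * m = a2 * e + a := by
    linear_combination (a2 : ℤ) * hee + (a : ℤ) * h1 + m * hd
  have hdn : d * n = b2 * e + b := by
    linear_combination (b2 : ℤ) * hee + (b : ℤ) * h1 + n * hd
  have ha1 : 1 ≤ (a : ℤ) := by exact_mod_cast ha
  have hb21 : 1 ≤ (b2 : ℤ) := by exact_mod_cast hb2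
  have ha20 : 0 ≤ (a2 : ℤ) := Int.natCast_nonneg a2
  have hb0 : 0 ≤ (b : ℤ) := Int.natCast_nonneg b
  -- e ≠ d
  have hened : e ≠ d := by
    intro hedq
    have hda : d ∣ (a : ℤ) := ⟨m - a2, by linear_combination -hdm - (a2 : ℤ) * hedq⟩
    have hdb : d ∣ (b : ℤ) := ⟨n - b2, by linear_combination -hdn - (b2 : ℤ) * hedq⟩
    have hcab : IsCoprime (a : ℤ) (b : ℤ) := by
      rw [Int.isCoprime_iff_gcd_eq_one]; exact_mod_cast hab
    have := Int.isUnit_iff.mp (hcab.isUnit_of_dvd' hda hdb)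
    omega
  have hedm1 : e ≤ d - 1 := by omega
  -- positivity of m, n
  have hm1 : 1 ≤ m := by
    rcases le_or_gt 1 m with h' | h'
    · exact h'
    · exfalso
      have hmn : d * m ≤ 0 := mul_nonpos_of_nonneg_of_nonpos (by omega) (by omega)
      have ha2e : 0 ≤ (a2 : ℤ) * e := mul_nonneg ha20 (by omega)
      linarith
  have hn1 : 1 ≤ n := by
    rcases le_or_gt 1 n with h' | h'
    · exact h'
    · exfalso
      have hmn : d * n ≤ 0 := mul_nonpos_of_nonneg_of_nonpos (by omega) (by omega)
      have hb2e : 0 < (b2 : ℤ) * e := mul_pos (by omega) (by omega)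
      linarith
  -- bounds
  have hmb : m ≤ (a : ℤ) ∨ m ≤ (a2 : ℤ) := by
    have h2 : (a2 : ℤ) * e ≤ a2 * (d - 1) := mul_le_mul_of_nonneg_left hedm1 ha20
    rcases le_total (a : ℤ) a2 with hc | hc
    · right
      have h3 : (a2 : ℤ) * (d - 1) + a2 = d * a2 := by ring
      have key : d * m ≤ d * a2 := by linarith
      exact le_of_mul_le_mul_left key (by omega)
    · left
      have h4 : (a2 : ℤ) * (d - 1) ≤ a * (d - 1) :=
        mul_le_mul_of_nonneg_right hc (by omega)
      have h3 : (a : ℤ) * (d - 1) + a = d * a := by ring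
      have key : d * m ≤ d * a := by linarith
      exact le_of_mul_le_mul_left key (by omega)
  have hnb : n ≤ (b : ℤ) ∨ n ≤ (b2 : ℤ) := by
    have h2 : (b2 : ℤ) * e ≤ b2 * (d - 1) := mul_le_mul_of_nonneg_left hedm1 (by omega)
    rcases le_total (b : ℤ) b2 with hc | hc
    · right
      have h3 : (b2 : ℤ) * (d - 1) + b2 = d * b2 := by ring
      have key : d * n ≤ d * b2 := by linarith
      exact le_of_mul_le_mul_left key (by omega)
    · left
      have h4 : (b2 : ℤ) * (d - 1) ≤ b * (d - 1) :=
        mul_le_mul_of_nonneg_right hc (by omega)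
      have h3 : (b : ℤ) * (d - 1) + b = d * b := by ring
      have key : d * n ≤ d * b := by linarith
      exact le_of_mul_le_mul_left key (by omega)
  have hcmn : IsCoprime m n := ⟨b2, -a2, by linear_combination h1⟩
  have hmtn : (m.toNat : ℤ) = m := Int.toNat_of_nonneg (by omega)
  have hntn : (n.toNat : ℤ) = n := Int.toNat_of_nonneg (by omega)
  apply hno
  refine ⟨m.toNat, n.toNat, ?_, ?_, ?_, ?_, ?_, ?_⟩
  · have hg : Int.gcd m n = 1 := Int.isCoprime_iff_gcd_eq_one.mp hcmn
    unfold Nat.Coprime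
    rw [show m.toNat = m.natAbs by omega, show n.toNat = n.natAbs by omega]
    simpa [Int.gcd] using hg
  · omega
  · -- m.toNat ≤ K
    have haK' : (a : ℤ) ≤ K := by exact_mod_cast haK
    have ha2K' : (a2 : ℤ) ≤ K := by exact_mod_cast ha2K
    omega
  · have hbK' : (b : ℤ) ≤ K := by exact_mod_cast hbK
    have hb2K' : (b2 : ℤ) ≤ K := by exact_mod_cast hb2K
    omega
  · zify
    rw [hmtn, hntn]
    have : (n : ℤ) * a = a * n := mul_comm _ _
    omega
  · zify
    rw [hmtn, hntn]
    have : (n : ℤ) * a2 = a2 * n := mul_comm _ _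
    omega

theorem farey_big (K a b a2 b2 : ℕ) (h : FareyPairOrd K a b a2 b2) :
    K < a + a2 ∨ K < b + b2 := by
  have hdet := farey_det K a b a2 b2 h
  obtain ⟨ha, hb2, hab, ha2b2, haK, hbK, ha2K, hb2K, hlt, hno⟩ := h
  by_contra hcon
  push_neg at hcon
  obtain ⟨hA, hS⟩ := hcon
  apply hno
  refine ⟨a + a2, b + b2, ?_, by omega, hA, hS, ?_, ?_⟩
  · set g := Nat.gcd (a + a2) (b + b2) with hg
    obtain ⟨x, hx⟩ := Nat.gcd_dvd_left (a + a2) (b + b2)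
    obtain ⟨y, hy⟩ := Nat.gcd_dvd_right (a + a2) (b + b2)
    have hgd : (g : ℤ) ∣ 1 := by
      refine ⟨(b2 : ℤ) * x - a2 * y, ?_⟩
      have hx' : (a : ℤ) + a2 = g * x := by exact_mod_cast hx
      have hy' : (b : ℤ) + b2 = g * y := by exact_mod_cast hy
      linear_combination (b2 : ℤ) * hx' - (a2 : ℤ) * hy' - hdet
    have : g ∣ 1 := by exact_mod_cast hgd
    exact Nat.dvd_one.mp this
  · rw [Nat.mul_add, Nat.add_mul]; omega
  · rw [Nat.add_mul, Nat.mul_add]; omega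

theorem farey_nozero (K a b a2 b2 : ℕ) (h : FareyPairOrd K a b a2 b2)
    (m n : ℤ) (hmn : (m, n) ≠ (0, 0)) (hm : |m| ≤ (K : ℤ)) (hn : |n| ≤ (K : ℤ)) :
    ((a : ℤ) + a2) * n ≠ ((b : ℤ) + b2) * m := by
  intro heq
  have hdet := farey_det K a b a2 b2 h
  have hAS : IsCoprime ((a : ℤ) + a2) ((b : ℤ) + b2) :=
    ⟨(b2 : ℤ), -(a2 : ℤ), by linear_combination hdet⟩
  have hA1 : 1 ≤ (a : ℤ) + a2 := by
    have : 1 ≤ a := h.1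
    have : (1 : ℤ) ≤ a := by exact_mod_cast this
    have := Int.natCast_nonneg a2
    omega
  have hS1 : 1 ≤ (b : ℤ) + b2 := by
    have : 1 ≤ b2 := h.2.1
    have : (1 : ℤ) ≤ b2 := by exact_mod_cast this
    have := Int.natCast_nonneg b
    omega
  have hmn' : m ≠ 0 ∨ n ≠ 0 := by
    by_contra hc; push_neg at hc; exact hmn (by simp [hc.1, hc.2])
  rcases farey_big K a b a2 b2 h with hK | hK
  · have hKA : (K : ℤ) < (a : ℤ) + a2 := by exact_mod_cast hK
    have hAm : ((a : ℤ) + a2) ∣ m :=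
      hAS.dvd_of_dvd_mul_left ⟨n, by linarith [heq]⟩
    have hm0 : m = 0 := Int.eq_zero_of_abs_lt_dvd hAm (by omega)
    have hn0 : n = 0 := by
      rw [hm0, mul_zero] at heq
      rcases mul_eq_zero.mp heq with h' | h'
      · omega
      · exact h'
    exact hmn (by simp [hm0, hn0])
  · have hKS : (K : ℤ) < (b : ℤ) + b2 := by exact_mod_cast hK
    have hSn : ((b : ℤ) + b2) ∣ n :=
      hAS.symm.dvd_of_dvd_mul_left ⟨m, by linarith [heq]⟩
    have hn0 : n = 0 := Int.eq_zero_of_abs_lt_dvd hSn (by omega)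
    have hm0 : m = 0 := by
      rw [hn0, mul_zero] at heq
      rcases mul_eq_zero.mp heq.symm with h' | h'
      · omega
      · exact h'
    exact hmn (by simp [hm0, hn0])

set_option maxHeartbeats 1000000 in
/-- Lemma 1, case 1(a): weak-cross-link subcase with large direct-link ratio. -/
theorem lemma1_case1a (M : ℕ) (hM : 2 ≤ M) (hMe : Even M)
    (h11 h21 h22 p1 p2 : ℝ)
    (h11p : 0 < h11) (h21p : 0 < h21) (h22p : 0 < h22)
    (hp1 : 0 < p1) (hp2 : 0 < p2)
    (a b a2 b2 : ℕ) (hfp : FareyPairOrd (M - 1) a b a2 b2)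
    (W1 W2 : ℝ)
    (hW1 : W1 = Real.sqrt (3 * p1 / ((M : ℝ) ^ 2 - 1)))
    (hW2 : W2 = Real.sqrt (3 * p2 / ((M : ℝ) ^ 2 - 1)))
    (hcross : h21 / h22 ≤ (b : ℝ) + b2)
    (hratio : Real.sqrt p2 * ((a : ℝ) + a2) / (Real.sqrt p1 * ((b : ℝ) + b2))
        ≤ h11 / h21) :
    IsGreatest {v : ℝ | ∃ w1 w2 : ℝ, Feas W1 W2 h11 h21 a b a2 b2 w1 w2 ∧
        v = f M h11 h21 h22 w1 w2} (h21 / ((b : ℝ) + b2) * W2) ∧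
    Feas W1 W2 h11 h21 a b a2 b2
      ((((a : ℝ) + a2) * h21 / (((b : ℝ) + b2) * h11)) * W2) W2 ∧
    f M h11 h21 h22 ((((a : ℝ) + a2) * h21 / (((b : ℝ) + b2) * h11)) * W2) W2 =
      h21 / ((b : ℝ) + b2) * W2 := by
  have hM2 : (2 : ℝ) ≤ (M : ℝ) := by exact_mod_cast hM
  have hMsq : (0 : ℝ) < (M : ℝ) ^ 2 - 1 := by nlinarith
  have hW2pos : 0 < W2 := by rw [hW2]; positivity
  have hW1pos : 0 < W1 := by rw [hW1]; positivity
  obtain ⟨ha, hb2, hab, ha2b2, haK, hbK, ha2K, hb2K, hlt, hno⟩ := hfp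
  have hfp : FareyPairOrd (M - 1) a b a2 b2 :=
    ⟨ha, hb2, hab, ha2b2, haK, hbK, ha2K, hb2K, hlt, hno⟩
  have hdet := farey_det (M - 1) a b a2 b2 hfp
  have hdetR : (a : ℝ) * b2 = a2 * b + 1 := by exact_mod_cast hdet
  have hb2R : (1 : ℝ) ≤ (b2 : ℝ) := by exact_mod_cast hb2
  have haR : (1 : ℝ) ≤ (a : ℝ) := by exact_mod_cast ha
  have hbR : (0 : ℝ) ≤ (b : ℝ) := Nat.cast_nonneg b
  have ha2R : (0 : ℝ) ≤ (a2 : ℝ) := Nat.cast_nonneg a2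
  have hS0 : (0 : ℝ) < (b : ℝ) + b2 := by linarith
  have hA0 : (0 : ℝ) < (a : ℝ) + a2 := by linarith
  set w1s : ℝ := (((a : ℝ) + a2) * h21 / (((b : ℝ) + b2) * h11)) * W2 with hw1s
  have hw1spos : 0 < w1s := by rw [hw1s]; positivity
  have hX : h11 * w1s * ((b : ℝ) + b2) = ((a : ℝ) + a2) * h21 * W2 := by
    rw [hw1s]; field_simp
  have hltR : (b : ℝ) * a2 < (b2 : ℝ) * a := by exact_mod_cast hlt
  -- lower bound 0 for the defining set, for any w1 w2
  have hbdd : ∀ w1 w2 : ℝ, ∀ x ∈ {d : ℝ | ∃ m n : ℤ, (m, n) ≠ (0, 0) ∧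
      |m| ≤ (M : ℤ) - 1 ∧ |n| ≤ (M : ℤ) - 1 ∧
      d = |h11 * w1 * n - h21 * w2 * m|}, (0:ℝ) ≤ x := by
    rintro w1 w2 x ⟨m, n, -, -, -, rfl⟩
    exact abs_nonneg _
  -- Feasibility of the optimizer
  have hfeas : Feas W1 W2 h11 h21 a b a2 b2 w1s W2 := by
    refine ⟨hw1spos, ?_, hW2pos, le_refl _, ?_, ?_⟩
    · -- w1s ≤ W1
      have hsp1 : 0 < Real.sqrt p1 := Real.sqrt_pos.mpr hp1
      have hsp2 : 0 < Real.sqrt p2 := Real.sqrt_pos.mpr hp2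
      have hW1' : W1 = Real.sqrt p1 * Real.sqrt (3 / ((M : ℝ) ^ 2 - 1)) := by
        rw [hW1, ← Real.sqrt_mul hp1.le]
        ring_nf
      have hW2' : W2 = Real.sqrt p2 * Real.sqrt (3 / ((M : ℝ) ^ 2 - 1)) := by
        rw [hW2, ← Real.sqrt_mul hp2.le]
        ring_nf
      have hr := (div_le_div_iff₀ (by positivity) h21p).mp hratio
      -- hr : sqrt p2 * (a+a2) * h21 ≤ h11 * (sqrt p1 * (b+b2))
      have hcnn : (0:ℝ) ≤ Real.sqrt (3 / ((M : ℝ) ^ 2 - 1)) := Real.sqrt_nonneg _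
      rw [hw1s, hW1', hW2', div_mul_eq_mul_div, div_le_iff₀ (by positivity)]
      linarith [mul_le_mul_of_nonneg_right hr hcnn]
    · -- b * h11 * w1s < a * h21 * W2
      have hba : (b : ℝ) * ((a : ℝ) + a2) < (a : ℝ) * ((b : ℝ) + b2) := by
        have : (b : ℝ) * a2 < (a : ℝ) * b2 := by linarith [hltR]
        nlinarith
      have h6 := mul_lt_mul_of_pos_right hba (mul_pos h21p hW2pos)
      have hX' : (b : ℝ) * (h11 * w1s * ((b : ℝ) + b2)) =
          (b : ℝ) * (((a : ℝ) + a2) * h21 * W2) := by rw [hX]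
      have h5 : (b : ℝ) * h11 * w1s * ((b : ℝ) + b2) <
          (a : ℝ) * h21 * W2 * ((b : ℝ) + b2) := by linarith [h6, hX']
      exact lt_of_mul_lt_mul_right h5 hS0.le
    · -- a2 * h21 * W2 ≤ b2 * h11 * w1s
      have hba : (a2 : ℝ) * ((b : ℝ) + b2) ≤ (b2 : ℝ) * ((a : ℝ) + a2) := by nlinarith [hltR]
      have h6 := mul_le_mul_of_nonneg_right hba (mul_pos h21p hW2pos).le
      have hX' : (b2 : ℝ) * (h11 * w1s * ((b : ℝ) + b2)) =
          (b2 : ℝ) * (((a : ℝ) + a2) * h21 * W2) := by rw [hX]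
      have h5 : (a2 : ℝ) * h21 * W2 * ((b : ℝ) + b2) ≤
          (b2 : ℝ) * h11 * w1s * ((b : ℝ) + b2) := by linarith [h6, hX']
      exact le_of_mul_le_mul_right h5 hS0
  -- value of minDist1 at the optimizer
  have hval : h11 * w1s * ((b2 : ℤ) : ℝ) - h21 * W2 * ((a2 : ℤ) : ℝ) =
      h21 / ((b : ℝ) + b2) * W2 := by
    push_cast
    rw [div_mul_eq_mul_div, eq_div_iff hS0.ne']
    linear_combination (b2 : ℝ) * hX + (h21 * W2) * hdetR
  have hmd : minDist1 M h11 h21 w1s W2 = h21 / ((b : ℝ) + b2) * W2 := by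
    have hmem : h21 / ((b : ℝ) + b2) * W2 ∈ {d : ℝ | ∃ m n : ℤ, (m, n) ≠ (0, 0) ∧
        |m| ≤ (M : ℤ) - 1 ∧ |n| ≤ (M : ℤ) - 1 ∧
        d = |h11 * w1s * n - h21 * W2 * m|} := by
      refine ⟨(a2 : ℤ), (b2 : ℤ), ?_, by rw [Int.abs_natCast]; omega,
        by rw [Int.abs_natCast]; omega, ?_⟩
      · simp only [ne_eq, Prod.mk.injEq, not_and]
        intro _ hq
        have : b2 = 0 := by exact_mod_cast hq
        omega
      · rw [hval, abs_of_nonneg (by positivity)]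
    apply le_antisymm
    · exact csInf_le ⟨0, fun x hx => hbdd w1s W2 x hx⟩ hmem
    · apply le_csInf ⟨_, hmem⟩
      rintro x ⟨m, n, hmn, hm, hn, rfl⟩
      have hnz : ((a : ℤ) + a2) * n ≠ ((b : ℤ) + b2) * m := by
        apply farey_nozero (M - 1) a b a2 b2 hfp m n hmn <;> omega
      set z : ℤ := ((a : ℤ) + a2) * n - ((b : ℤ) + b2) * m with hz
      have hz1 : 1 ≤ |z| := Int.one_le_abs (by omega)
      have hz1R : (1 : ℝ) ≤ |(z : ℝ)| := by
        rw [← Int.cast_abs]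
        exact_mod_cast hz1
      have hexpr : h11 * w1s * (n : ℝ) - h21 * W2 * (m : ℝ) =
          h21 * W2 / ((b : ℝ) + b2) * (z : ℝ) := by
        rw [hz, hw1s]
        push_cast
        field_simp
      rw [hexpr, abs_mul, abs_of_nonneg (by positivity : (0:ℝ) ≤ h21 * W2 / ((b : ℝ) + b2))]
      calc h21 / ((b : ℝ) + b2) * W2 = h21 * W2 / ((b : ℝ) + b2) * 1 := by ring
        _ ≤ h21 * W2 / ((b : ℝ) + b2) * |(z : ℝ)| := by
            apply mul_le_mul_of_nonneg_left hz1R (by positivity)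
  have hPle : h21 / ((b : ℝ) + b2) * W2 ≤ h22 * W2 := by
    rw [div_le_iff₀ h22p] at hcross
    rw [div_mul_eq_mul_div, div_le_iff₀ hS0]
    linarith [mul_le_mul_of_nonneg_right hcross hW2pos.le]
  have hP : f M h11 h21 h22 w1s W2 = h21 / ((b : ℝ) + b2) * W2 := by
    unfold f
    rw [hmd]
    exact min_eq_left hPle
  -- upper bound
  have hub : ∀ x ∈ {v : ℝ | ∃ w1 w2 : ℝ, Feas W1 W2 h11 h21 a b a2 b2 w1 w2 ∧
      v = f M h11 h21 h22 w1 w2}, x ≤ h21 / ((b : ℝ) + b2) * W2 := by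
    rintro x ⟨w1, w2, ⟨hw1, hw1W, hw2, hw2W, hfe1, hfe2⟩, rfl⟩
    have hbdd' : BddBelow {d : ℝ | ∃ m n : ℤ, (m, n) ≠ (0, 0) ∧
        |m| ≤ (M : ℤ) - 1 ∧ |n| ≤ (M : ℤ) - 1 ∧
        d = |h11 * w1 * n - h21 * w2 * m|} := ⟨0, fun y hy => hbdd w1 w2 y hy⟩
    have hd1 : minDist1 M h11 h21 w1 w2 ≤ |h11 * w1 * ((b : ℤ) : ℝ) - h21 * w2 * ((a : ℤ) : ℝ)| := by
      apply csInf_le hbdd'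
      refine ⟨(a : ℤ), (b : ℤ), ?_, by rw [Int.abs_natCast]; omega,
        by rw [Int.abs_natCast]; omega, rfl⟩
      simp only [ne_eq, Prod.mk.injEq, not_and]
      intro hq
      have : a = 0 := by exact_mod_cast hq
      omega
    have hd2 : minDist1 M h11 h21 w1 w2 ≤ |h11 * w1 * ((b2 : ℤ) : ℝ) - h21 * w2 * ((a2 : ℤ) : ℝ)| := by
      apply csInf_le hbdd'
      refine ⟨(a2 : ℤ), (b2 : ℤ), ?_, by rw [Int.abs_natCast]; omega,
        by rw [Int.abs_natCast]; omega, rfl⟩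
      simp only [ne_eq, Prod.mk.injEq, not_and]
      intro _ hq
      have : b2 = 0 := by exact_mod_cast hq
      omega
    have habs1 : |h11 * w1 * ((b : ℤ) : ℝ) - h21 * w2 * ((a : ℤ) : ℝ)| =
        (a : ℝ) * h21 * w2 - (b : ℝ) * h11 * w1 := by
      push_cast
      rw [abs_of_nonpos (by linarith)]
      ring
    have habs2 : |h11 * w1 * ((b2 : ℤ) : ℝ) - h21 * w2 * ((a2 : ℤ) : ℝ)| =
        (b2 : ℝ) * h11 * w1 - (a2 : ℝ) * h21 * w2 := by
      push_cast
      rw [abs_of_nonneg (by linarith)]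
      ring
    rw [habs1] at hd1
    rw [habs2] at hd2
    set q := minDist1 M h11 h21 w1 w2 with hq
    have hcomb : ((b : ℝ) + b2) * q ≤ h21 * w2 := by
      have e1 := mul_le_mul_of_nonneg_left hd1 (by linarith : (0:ℝ) ≤ (b2 : ℝ))
      have e2 := mul_le_mul_of_nonneg_left hd2 hbR
      have hd3 : (a : ℝ) * b2 * (h21 * w2) = ((a2 : ℝ) * b + 1) * (h21 * w2) := by
        rw [hdetR]
      linarith [e1, e2, hd3]
    have hfq : f M h11 h21 h22 w1 w2 ≤ q := min_le_left _ _
    have hqP : q ≤ h21 / ((b : ℝ) + b2) * W2 := by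
      rw [div_mul_eq_mul_div, le_div_iff₀ hS0]
      linarith [hcomb, mul_le_mul_of_nonneg_left hw2W h21p.le]
    linarith
  exact ⟨⟨⟨w1s, W2, hfeas, hP.symm⟩, hub⟩, hfeas, hP⟩
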